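/- arXiv:1706.00453 — 2 statements merged into one kernel-verified Lean document; each statement's English description precedes it below -/
import Mathlib

section
/- Fix β₀ > 0 and α₀ ∈ ℝ and set γ₀ = α₀ − β₀. A complex number λ is an eigenvalue of the linearised operator K if and only if λ J₀(λ) = (γ₀ − β₀ λ²) J₁(λ). -/
open Filter Topology Set
open scoped Nat

noncomputable section

lemma summable_psum {a : ℕ → ℂ} (h : ∀ k, ‖a k‖ ≤ 1 / k !) (w : ℂ) :
    Summable fun k => a k * w ^ k := by
  apply Summable.of_norm
  refine Summable.of_nonneg_of_le (fun k => norm_nonneg _) (fun k => ?_)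
    (Real.summable_pow_div_factorial ‖w‖)
  rw [norm_mul, norm_pow]
  calc ‖a k‖ * ‖w‖ ^ k ≤ (1 / k !) * ‖w‖ ^ k :=
        mul_le_mul_of_nonneg_right (h k) (by positivity)
    _ = ‖w‖ ^ k / k ! := by ring

lemma shift_bound {a : ℕ → ℂ} (h : ∀ k, ‖a k‖ ≤ 1 / k !) :
    ∀ k : ℕ, ‖((k : ℂ) + 1) * a (k + 1)‖ ≤ 1 / k ! := by
  intro k
  rw [norm_mul]
  have h1 : ‖((k : ℂ) + 1)‖ = (k : ℝ) + 1 := by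
    rw [show ((k : ℂ) + 1) = ((k + 1 : ℕ) : ℂ) by push_cast; ring,
      Complex.norm_natCast]
    push_cast
    ring
  rw [h1]
  have hk : (0:ℝ) < (k:ℝ) + 1 := by positivity
  have hf : (0:ℝ) < (k ! : ℝ) := by positivity
  calc ((k : ℝ) + 1) * ‖a (k + 1)‖ ≤ ((k : ℝ) + 1) * (1 / (k + 1)!) :=
        mul_le_mul_of_nonneg_left (h (k + 1)) (by positivity)
    _ = 1 / k ! := by
        rw [Nat.factorial_succ]
        push_cast
        field_simp

/-- Termwise differentiation for entire series with coefficients `≤ 1/k!`. -/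
lemma hasDerivAt_psum {a : ℕ → ℂ} (h : ∀ k, ‖a k‖ ≤ 1 / k !) (z : ℂ) :
    HasDerivAt (fun w => ∑' k : ℕ, a k * w ^ k)
      (∑' k : ℕ, ((k : ℂ) + 1) * a (k + 1) * z ^ k) z := by
  set R : ℝ := ‖z‖ + 1 with hR
  have hRpos : (0 : ℝ) < R := by have := norm_nonneg z; simp only [hR]; linarith
  have hu : Summable fun k : ℕ => (2 * R) ^ k / k ! := Real.summable_pow_div_factorial _
  refine hasDerivAt_of_tendstoUniformlyOn
    (f := fun n (w : ℂ) => ∑ k ∈ Finset.range (n + 1), a k * w ^ k)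
    (f' := fun n (w : ℂ) => ∑ k ∈ Finset.range n, ((k : ℂ) + 1) * a (k + 1) * w ^ k)
    (g := fun w => ∑' k : ℕ, a k * w ^ k)
    (g' := fun w => ∑' k : ℕ, ((k : ℂ) + 1) * a (k + 1) * w ^ k)
    (l := atTop) Metric.isOpen_ball ?_ ?_ ?_ (show z ∈ Metric.ball (0:ℂ) R by
      simp only [Metric.mem_ball, dist_zero_right, hR]; linarith)
  · apply (tendstoUniformlyOn_tsum_nat (u := fun k => (2 * R) ^ k / k !) hu ?_).mono
      Metric.ball_subset_closedBall
    intro k y hy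
    have hyR : ‖y‖ ≤ R := by simpa using hy
    rw [norm_mul, norm_pow]
    have h2 : R ^ k ≤ (2 * R) ^ k := by
      apply pow_le_pow_left₀ hRpos.le (by linarith)
    calc ‖((k:ℂ)+1) * a (k+1)‖ * ‖y‖ ^ k ≤ (1 / k !) * R ^ k :=
          mul_le_mul (shift_bound h k) (pow_le_pow_left₀ (norm_nonneg _) hyR k)
            (by positivity) (by positivity)
      _ = R ^ k / k ! := by ring
      _ ≤ (2 * R) ^ k / k ! := by
          apply div_le_div_of_nonneg_right h2 (by positivity)
  · filter_upwards with n y _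
    have : HasDerivAt (fun w : ℂ => ∑ k ∈ Finset.range (n+1), a k * w ^ k)
        (∑ k ∈ Finset.range (n+1), a k * ((k : ℂ) * y ^ (k - 1))) y := by
      apply HasDerivAt.fun_sum
      intro k _
      exact (hasDerivAt_pow k y).const_mul (a k)
    refine this.congr_deriv (Eq.symm ?_)
    rw [Finset.sum_range_succ']
    simp only [Nat.cast_zero, zero_mul, mul_zero, add_zero, Nat.cast_ofNat]
    apply Finset.sum_congr rfl
    intro k _
    push_cast
    ring
  · intro y _
    have := (summable_psum h y).hasSum.tendsto_sum_nat
    exact this.comp (tendsto_add_atTop_nat 1)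

/-! ### The auxiliary entire functions `g0`, `g1` -/

def c0 (k : ℕ) : ℂ := (-1) ^ k / (4 ^ k * (k ! * k !))
def c1 (k : ℕ) : ℂ := (-1) ^ k / (4 ^ k * (k ! * (k + 1)!))

lemma factorial_c_ne_zero (k : ℕ) : ((k ! : ℂ)) ≠ 0 :=
  Nat.cast_ne_zero.mpr (Nat.factorial_ne_zero k)

lemma natsucc_c_ne_zero (k : ℕ) : ((k : ℂ) + 1) ≠ 0 := by
  have : ((k + 1 : ℕ) : ℂ) ≠ 0 := Nat.cast_ne_zero.mpr (Nat.succ_ne_zero k)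
  push_cast at this; exact this

lemma c0_bound : ∀ k, ‖c0 k‖ ≤ 1 / k ! := by
  intro k
  rw [c0, norm_div, norm_mul, norm_mul, norm_pow, norm_pow]
  simp only [norm_neg, norm_one, one_pow, Complex.norm_natCast]
  rw [show ‖(4:ℂ)‖ = 4 by norm_num]
  have h1 : (1:ℝ) ≤ 4 ^ k := one_le_pow₀ (by norm_num)
  have h2 : (1:ℝ) ≤ (k ! : ℝ) := by exact_mod_cast Nat.one_le_iff_ne_zero.mpr (Nat.factorial_ne_zero k)
  have h3 : (0:ℝ) < (k ! : ℝ) := by positivity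
  rw [div_le_div_iff₀ (by positivity) h3]
  nlinarith

lemma c1_bound : ∀ k, ‖c1 k‖ ≤ 1 / k ! := by
  intro k
  rw [c1, norm_div, norm_mul, norm_mul, norm_pow, norm_pow]
  simp only [norm_neg, norm_one, one_pow, Complex.norm_natCast]
  rw [show ‖(4:ℂ)‖ = 4 by norm_num]
  have h1 : (1:ℝ) ≤ 4 ^ k := one_le_pow₀ (by norm_num)
  have h2 : (0:ℝ) < (k ! : ℝ) := by positivity
  have h2' : (1:ℝ) ≤ ((k+1)! : ℝ) := by exact_mod_cast Nat.one_le_iff_ne_zero.mpr (Nat.factorial_ne_zero (k+1))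
  rw [div_le_div_iff₀ (by positivity) h2]
  have c1 : (1:ℝ) * (k !:ℝ) = (k !:ℝ) := by ring
  rw [c1, one_mul]
  calc (k ! : ℝ) ≤ (k ! : ℝ) * ((k+1)! : ℝ) := le_mul_of_one_le_right h2.le h2'
    _ ≤ 4 ^ k * ((k ! : ℝ) * ((k+1)! : ℝ)) := le_mul_of_one_le_left (by positivity) h1

def g0 (w : ℂ) : ℂ := ∑' k : ℕ, c0 k * w ^ k
def g1 (w : ℂ) : ℂ := ∑' k : ℕ, c1 k * w ^ k
def g1d (w : ℂ) : ℂ := ∑' k : ℕ, ((k : ℂ) + 1) * c1 (k + 1) * w ^ k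

lemma c1_shift (k : ℕ) : ((k : ℂ) + 1) * c0 (k + 1) = -(c1 k) / 4 := by
  have hb := factorial_c_ne_zero k
  have hk := natsucc_c_ne_zero k
  have h4 : ((4:ℂ)) ^ k ≠ 0 := pow_ne_zero _ (by norm_num)
  have e : (((k+1)! : ℕ) : ℂ) = ((k:ℂ)+1) * (k ! : ℂ) := by
    rw [Nat.factorial_succ]; push_cast; ring
  rw [c0, c1, e, pow_succ, pow_succ, mul_div_assoc', neg_div', div_div]
  rw [div_eq_div_iff
    (mul_ne_zero (mul_ne_zero h4 (by norm_num))
      (mul_ne_zero (mul_ne_zero hk hb) (mul_ne_zero hk hb)))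
    (mul_ne_zero (mul_ne_zero h4 (mul_ne_zero hb (mul_ne_zero hk hb))) (by norm_num))]
  ring

lemma c0_eq_c1 (k : ℕ) : ((k : ℂ) + 1) * c1 k = c0 k := by
  rw [c0, c1, Nat.factorial_succ]
  have hb := factorial_c_ne_zero k
  have hk := natsucc_c_ne_zero k
  have h4 : ((4:ℂ)) ^ k ≠ 0 := pow_ne_zero _ (by norm_num)
  push_cast
  field_simp [hb, hk, h4]

lemma hasDerivAt_g0 (w : ℂ) : HasDerivAt g0 (-(g1 w) / 4) w := by
  have h := hasDerivAt_psum c0_bound w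
  have e1 : -(g1 w) / 4 = ∑' k : ℕ, ((k : ℂ) + 1) * c0 (k + 1) * w ^ k := by
    rw [g1, ← tsum_neg, ← tsum_div_const]
    exact tsum_congr fun k => by rw [c1_shift]; ring
  rw [e1]; exact h

lemma hasDerivAt_g1 (w : ℂ) : HasDerivAt g1 (g1d w) w := hasDerivAt_psum c1_bound w

lemma g1d_bound : ∀ k : ℕ, ‖((k : ℂ) + 1) * c1 (k + 1)‖ ≤ 1 / k ! := shift_bound c1_bound

lemma g_identity (w : ℂ) : g1 w + w * g1d w = g0 w := by
  have hs0 : HasSum (fun k : ℕ => c0 k * w ^ k) (g0 w) := (summable_psum c0_bound w).hasSum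
  have hs1 : HasSum (fun k : ℕ => c1 k * w ^ k) (g1 w) := (summable_psum c1_bound w).hasSum
  have hsd : HasSum (fun k : ℕ => ((k : ℂ) + 1) * c1 (k + 1) * w ^ k) (g1d w) :=
    (summable_psum g1d_bound w).hasSum
  have hsd' := hsd.mul_left w
  set F : ℕ → ℂ := fun k => (k : ℂ) * c1 k * w ^ k with hF
  have hfun : (fun k : ℕ => w * (((k : ℂ) + 1) * c1 (k + 1) * w ^ k)) = fun k => F (k + 1) := by
    funext k; simp only [hF]; push_cast; ring
  rw [hfun] at hsd'
  have hFsum : HasSum F (w * g1d w) := by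
    have := (hasSum_nat_add_iff (f := F) 1).mp (by convert hsd' using 1)
    simpa [hF] using this
  have hadd := hs1.add hFsum
  have hfun2 : (fun k : ℕ => c1 k * w ^ k + F k) = fun k : ℕ => c0 k * w ^ k := by
    funext k; simp only [hF]
    rw [← c0_eq_c1 k]; ring
  rw [hfun2] at hadd
  exact hadd.unique hs0

lemma g0_zero : g0 0 = 1 := by
  rw [g0]
  rw [tsum_eq_single 0]
  · simp [c0]
  · intro k hk
    simp [zero_pow hk]

lemma g0_differentiable : Differentiable ℂ g0 := fun w => (hasDerivAt_g0 w).differentiableAt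
lemma g1_differentiable : Differentiable ℂ g1 := fun w => (hasDerivAt_g1 w).differentiableAt

lemma g0_contDiff : ContDiff ℂ 2 g0 := by
  apply contDiff_iff_contDiffAt.mpr
  intro w
  exact (g0_differentiable.analyticAt w).contDiffAt
lemma g1_contDiff : ContDiff ℂ 2 g1 := by
  apply contDiff_iff_contDiffAt.mpr
  intro w
  exact (g1_differentiable.analyticAt w).contDiffAt


/-- The Bessel function of the first kind `J_n`, as a power series. -/
def besselJ (n : ℕ) (z : ℂ) : ℂ :=
  ∑' k : ℕ, (-1) ^ k * (z / 2) ^ (2 * k + n) / ((k ! : ℂ) * ((k + n)! : ℂ))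

lemma besselJ_zero_eq (z : ℂ) : besselJ 0 z = g0 (z ^ 2) := by
  rw [besselJ, g0]
  refine tsum_congr fun k => ?_
  have h1 : (z / 2) ^ (2 * k + 0) = (z ^ 2) ^ k / 4 ^ k := by
    rw [add_zero, pow_mul]
    rw [show (z / 2) ^ 2 = z ^ 2 / 4 by ring, div_pow]
  rw [h1, c0]
  simp only [add_zero]
  ring

lemma besselJ_one_eq (z : ℂ) : besselJ 1 z = z / 2 * g1 (z ^ 2) := by
  rw [besselJ, g1, ← tsum_mul_left]
  refine tsum_congr fun k => ?_
  have h1 : (z / 2) ^ (2 * k + 1) = (z ^ 2) ^ k / 4 ^ k * (z / 2) := by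
    rw [pow_succ, pow_mul]
    rw [show (z / 2) ^ 2 = z ^ 2 / 4 by ring, div_pow]
  rw [h1, c1]
  ring

lemma besselJ_one_zero : besselJ 1 0 = 0 := by
  rw [besselJ_one_eq]; ring

lemma besselJ_zero_zero : besselJ 0 0 = 1 := by
  rw [besselJ_zero_eq]
  norm_num [g0_zero]

lemma hasDerivAt_besselJ0 (z : ℂ) : HasDerivAt (besselJ 0) (-besselJ 1 z) z := by
  have hfun : besselJ 0 = fun z => g0 (z ^ 2) := funext besselJ_zero_eq
  have hpow : HasDerivAt (fun z : ℂ => z ^ 2) (2 * z) z := by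
    simpa using hasDerivAt_pow 2 z
  have h := (hasDerivAt_g0 (z ^ 2)).comp z hpow
  rw [hfun, besselJ_one_eq]
  refine h.congr_deriv (Eq.symm ?_)
  ring

lemma hasDerivAt_zbesselJ1 (z : ℂ) :
    HasDerivAt (fun z => z * besselJ 1 z) (z * besselJ 0 z) z := by
  have hfun : (fun z : ℂ => z * besselJ 1 z) = fun z => z ^ 2 / 2 * g1 (z ^ 2) := by
    funext y; rw [besselJ_one_eq]; ring
  have hpow : HasDerivAt (fun z : ℂ => z ^ 2) (2 * z) z := by
    simpa using hasDerivAt_pow 2 z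
  have hu : HasDerivAt (fun z : ℂ => z ^ 2 / 2) z z := by
    simpa using hpow.div_const 2
  have hv : HasDerivAt (fun z : ℂ => g1 (z ^ 2)) (g1d (z ^ 2) * (2 * z)) z :=
    by have h := (hasDerivAt_g1 (z ^ 2)).comp z hpow; exact h
  have h := hu.mul hv
  rw [hfun, besselJ_zero_eq]
  refine h.congr_deriv (Eq.symm ?_)
  linear_combination (z : ℂ) * (g_identity (z ^ 2)).symm

/-! ### The functions of a real variable -/

def P0 (l : ℂ) (r : ℝ) : ℂ := g0 (l ^ 2 * (r : ℂ) ^ 2)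
def P1 (l : ℂ) (r : ℝ) : ℂ := -(l ^ 2 * (r : ℂ) / 2) * g1 (l ^ 2 * (r : ℂ) ^ 2)
def P2 (l : ℂ) (r : ℝ) : ℂ :=
  -(l ^ 2 / 2) * g1 (l ^ 2 * (r : ℂ) ^ 2) - l ^ 4 * (r : ℂ) ^ 2 * g1d (l ^ 2 * (r : ℂ) ^ 2)

lemma hasDerivAt_ofReal (r : ℝ) : HasDerivAt (fun t : ℝ => (t : ℂ)) 1 r := by
  exact Complex.ofRealCLM.hasDerivAt (x := r)

lemma hasDerivAt_inner (l : ℂ) (r : ℝ) :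
    HasDerivAt (fun t : ℝ => l ^ 2 * (t : ℂ) ^ 2) (l ^ 2 * (2 * r)) r := by
  have e : (fun t : ℝ => l ^ 2 * (t : ℂ) ^ 2) = fun t : ℝ => l ^ 2 * ((t : ℂ) * (t : ℂ)) := by
    funext t; ring
  rw [e]
  have h := ((hasDerivAt_ofReal r).mul (hasDerivAt_ofReal r)).const_mul (l ^ 2)
  refine h.congr_deriv (Eq.symm ?_)
  ring

lemma hasDerivAt_P0 (l : ℂ) (r : ℝ) : HasDerivAt (P0 l) (P1 l r) r := by
  have h := (hasDerivAt_g0 (l ^ 2 * (r : ℂ) ^ 2)).scomp r (hasDerivAt_inner l r)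
  refine h.congr_deriv (Eq.symm ?_)
  rw [P1]
  simp only [smul_eq_mul]
  ring

lemma hasDerivAt_P1 (l : ℂ) (r : ℝ) : HasDerivAt (P1 l) (P2 l r) r := by
  have hg := (hasDerivAt_g1 (l ^ 2 * (r : ℂ) ^ 2)).scomp r (hasDerivAt_inner l r)
  have hu : HasDerivAt (fun t : ℝ => -(l ^ 2 * (t : ℂ) / 2)) (-(l ^ 2 / 2)) r := by
    have := ((hasDerivAt_ofReal r).const_mul (l ^ 2)).div_const 2
    have := this.neg; simp at this; exact this
  have h := hu.mul hg
  refine h.congr_deriv (Eq.symm ?_)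
  rw [P2]
  simp only [smul_eq_mul, Function.comp]
  ring

lemma P_ode (l : ℂ) {r : ℝ} (hr : r ≠ 0) :
    P2 l r + (r : ℂ)⁻¹ * P1 l r + l ^ 2 * P0 l r = 0 := by
  have hrc : (r : ℂ) ≠ 0 := Complex.ofReal_ne_zero.mpr hr
  have h1 : (r : ℂ)⁻¹ * P1 l r = -(l ^ 2 / 2) * g1 (l ^ 2 * (r : ℂ) ^ 2) := by
    rw [P1]
    field_simp
  rw [h1, P2, P0]
  linear_combination (-(l ^ 2)) * g_identity (l ^ 2 * (r : ℂ) ^ 2)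

lemma P0_eq_besselJ (l : ℂ) (r : ℝ) : P0 l r = besselJ 0 (l * r) := by
  rw [besselJ_zero_eq, P0, mul_pow]

lemma continuous_P0 (l : ℂ) : Continuous (P0 l) := by
  unfold P0
  exact g0_differentiable.continuous.comp (by continuity)
lemma continuous_P1 (l : ℂ) : Continuous (P1 l) := by
  unfold P1
  apply Continuous.mul (by continuity)
  exact g1_differentiable.continuous.comp (by continuity)

/-! ### Integral computations for the explicit solution -/

lemma integral_rP0 {l : ℂ} (hl : l ≠ 0) :
    (∫ r in (0:ℝ)..1, (r : ℂ) * P0 l r) = besselJ 1 l / l := by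
  have key : ∀ r ∈ Set.uIcc (0:ℝ) 1,
      HasDerivAt (fun t : ℝ => l⁻¹ * l⁻¹ * ((l * (t : ℂ)) * besselJ 1 (l * (t : ℂ))))
        ((r : ℂ) * P0 l r) r := by
    intro r _
    have hm : HasDerivAt (fun t : ℝ => l * (t : ℂ)) l r := by
      simpa using (hasDerivAt_ofReal r).const_mul l
    have hG := (hasDerivAt_zbesselJ1 (l * (r : ℂ))).scomp r hm
    have h := hG.const_mul (l⁻¹ * l⁻¹)
    refine h.congr_deriv (Eq.symm ?_)
    rw [P0_eq_besselJ]
    simp only [smul_eq_mul]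
    have h2 : l⁻¹ * l = 1 := inv_mul_cancel₀ hl
    linear_combination (-(1 + l⁻¹ * l) * (r:ℂ) * besselJ 0 (l * (r:ℂ))) * h2
  have hcont : IntervalIntegrable (fun r : ℝ => (r : ℂ) * P0 l r) MeasureTheory.volume 0 1 := by
    apply Continuous.intervalIntegrable
    exact (Complex.continuous_ofReal).mul (continuous_P0 l)
  have := intervalIntegral.integral_eq_sub_of_hasDerivAt key hcont
  rw [this]
  simp only [Complex.ofReal_one, Complex.ofReal_zero, mul_one, mul_zero, zero_mul, sub_zero]
  have h2 : l⁻¹ * l = 1 := inv_mul_cancel₀ hl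
  rw [eq_div_iff hl]
  linear_combination (l⁻¹ * l + 1) * besselJ 1 l * h2

lemma integral_2rP0_r2P1 (l : ℂ) :
    (∫ r in (0:ℝ)..1, (2 * (r : ℂ) * P0 l r + (r : ℂ) ^ 2 * P1 l r)) = P0 l 1 := by
  have key : ∀ r ∈ Set.uIcc (0:ℝ) 1,
      HasDerivAt (fun t : ℝ => ((t : ℂ)) ^ 2 * P0 l t)
        (2 * (r : ℂ) * P0 l r + (r : ℂ) ^ 2 * P1 l r) r := by
    intro r _
    have hsq : HasDerivAt (fun t : ℝ => ((t : ℂ)) ^ 2) (2 * (r : ℂ)) r := by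
      have e : (fun t : ℝ => ((t : ℂ)) ^ 2) = fun t : ℝ => (t : ℂ) * (t : ℂ) := by
        funext t; ring
      rw [e]
      have := (hasDerivAt_ofReal r).mul (hasDerivAt_ofReal r)
      exact this.congr_deriv (by ring)
    have h := hsq.mul (hasDerivAt_P0 l r)
    exact h
  have hcont : IntervalIntegrable
      (fun r : ℝ => 2 * (r : ℂ) * P0 l r + (r : ℂ) ^ 2 * P1 l r) MeasureTheory.volume 0 1 := by
    apply Continuous.intervalIntegrable
    apply Continuous.add
    · exact (continuous_const.mul Complex.continuous_ofReal).mul (continuous_P0 l)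
    · exact (Complex.continuous_ofReal.pow 2).mul (continuous_P1 l)
  have := intervalIntegral.integral_eq_sub_of_hasDerivAt key hcont
  rw [this]
  norm_num

lemma integral_r2P1 {l : ℂ} (hl : l ≠ 0) :
    (∫ r in (0:ℝ)..1, (r : ℂ) ^ 2 * P1 l r) = P0 l 1 - 2 * besselJ 1 l / l := by
  have h1 : IntervalIntegrable (fun r : ℝ => 2 * (r : ℂ) * P0 l r) MeasureTheory.volume 0 1 :=
    Continuous.intervalIntegrable
      ((continuous_const.mul Complex.continuous_ofReal).mul (continuous_P0 l)) 0 1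
  have h2 : IntervalIntegrable (fun r : ℝ => (r : ℂ) ^ 2 * P1 l r) MeasureTheory.volume 0 1 :=
    Continuous.intervalIntegrable ((Complex.continuous_ofReal.pow 2).mul (continuous_P1 l)) 0 1
  have hadd := intervalIntegral.integral_add h1 h2
  rw [integral_2rP0_r2P1 l] at hadd
  have h3 : (∫ r in (0:ℝ)..1, 2 * (r : ℂ) * P0 l r) = 2 * (besselJ 1 l / l) := by
    have e : (fun r : ℝ => 2 * (r : ℂ) * P0 l r) = fun r : ℝ => 2 * ((r : ℂ) * P0 l r) := by
      funext r; ring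
    rw [e, intervalIntegral.integral_const_mul, integral_rP0 hl]
  rw [h3] at hadd
  linear_combination -hadd
lemma integral_ofReal01 : (∫ r in (0:ℝ)..1, (r : ℂ)) = 1 / 2 := by
  have key : ∀ r ∈ Set.uIcc (0:ℝ) 1,
      HasDerivAt (fun t : ℝ => ((t : ℂ)) ^ 2 / 2) ((r : ℂ)) r := by
    intro r _
    have e : (fun t : ℝ => ((t : ℂ)) ^ 2 / 2) = fun t : ℝ => ((t : ℂ) * (t : ℂ)) / 2 := by
      funext t; ring
    rw [e]
    have := ((hasDerivAt_ofReal r).mul (hasDerivAt_ofReal r)).div_const 2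
    exact this.congr_deriv (by ring)
  have hcont : IntervalIntegrable (fun r : ℝ => (r : ℂ)) MeasureTheory.volume 0 1 :=
    Continuous.intervalIntegrable Complex.continuous_ofReal 0 1
  have := intervalIntegral.integral_eq_sub_of_hasDerivAt key hcont
  rw [this]
  norm_num

/-! ### Smoothness of the explicit solution -/

lemma contDiffInnerMap (l : ℂ) : ContDiff ℝ 2 (fun t : ℝ => l ^ 2 * (t : ℂ) ^ 2) := by
  apply ContDiff.mul contDiff_const
  exact (Complex.ofRealCLM.contDiff).pow 2

lemma contDiff_P0 (l : ℂ) : ContDiff ℝ 2 (P0 l) := by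
  unfold P0
  exact (g0_contDiff.restrict_scalars ℝ).comp (contDiffInnerMap l)

/-- `λ` is an eigenvalue of the linearised operator `K` (parameters `β₀ > 0`,
`γ₀ = α₀ − β₀`): there is a nonzero quadruple `(η, ω, φ, ζ)` with `φ ∈ C²([0,1],ℂ)`,
`ζ ∈ C¹([0,1],ℂ)` satisfying the linearised equations and boundary conditions. -/
def IsEigenvalueK (β₀ γ₀ : ℝ) (lam : ℂ) : Prop :=
  ∃ (η ω : ℂ) (phi zeta : ℝ → ℂ),
    ContDiffOn ℝ 2 phi (Set.Icc 0 1) ∧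
    ContDiffOn ℝ 1 zeta (Set.Icc 0 1) ∧
    (β₀ : ℂ)⁻¹ * (ω - ∫ r in (0:ℝ)..1, (r : ℂ) ^ 2 * derivWithin phi (Set.Icc 0 1) r)
      = lam * η ∧
    (-2) * (∫ r in (0:ℝ)..1, (r : ℂ) * zeta r) + ((γ₀ : ℂ) - 2) * η = lam * ω ∧
    (∀ r ∈ Set.Icc (0:ℝ) 1, zeta r + 2 * η = lam * phi r) ∧
    (∀ r ∈ Set.Ioc (0:ℝ) 1,
      -(derivWithin (derivWithin phi (Set.Icc 0 1)) (Set.Icc 0 1) r)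
        - (r : ℂ)⁻¹ * derivWithin phi (Set.Icc 0 1) r
        - 2 * (β₀ : ℂ)⁻¹ *
            (ω - ∫ r in (0:ℝ)..1, (r : ℂ) ^ 2 * derivWithin phi (Set.Icc 0 1) r)
      = lam * zeta r) ∧
    derivWithin phi (Set.Icc 0 1) 0 = 0 ∧
    derivWithin phi (Set.Icc 0 1) 1
      + (β₀ : ℂ)⁻¹ * (ω - ∫ r in (0:ℝ)..1, (r : ℂ) ^ 2 * derivWithin phi (Set.Icc 0 1) r)
      = 0 ∧
    ¬(η = 0 ∧ ω = 0 ∧ (∀ r ∈ Set.Icc (0:ℝ) 1, phi r = 0) ∧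
        (∀ r ∈ Set.Icc (0:ℝ) 1, zeta r = 0))

lemma backward_lam_zero (β₀ γ₀ : ℝ) : IsEigenvalueK β₀ γ₀ 0 := by
  have hdc : ∀ x ∈ Set.Icc (0:ℝ) 1, derivWithin (fun _ : ℝ => (1:ℂ)) (Set.Icc 0 1) x = 0 :=
    fun x hx => congrFun (derivWithin_const _ _) x
  have hint : (∫ r in (0:ℝ)..1, (r:ℂ)^2 * derivWithin (fun _ : ℝ => (1:ℂ)) (Set.Icc 0 1) r) = 0 := by
    rw [intervalIntegral.integral_congr (g := fun _ => (0:ℂ))]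
    · simp
    · intro r hr
      rw [Set.uIcc_of_le (by norm_num : (0:ℝ) ≤ 1)] at hr
      show (r:ℂ)^2 * derivWithin (fun _ : ℝ => (1:ℂ)) (Set.Icc 0 1) r = 0
      rw [hdc r hr]; ring
  refine ⟨0, 0, fun _ => 1, fun _ => 0, contDiffOn_const, contDiffOn_const, ?_, ?_, ?_, ?_, ?_, ?_, ?_⟩
  · rw [hint]; simp
  · simp
  · simp
  · intro r hr
    have hrm : r ∈ Set.Icc (0:ℝ) 1 := ⟨hr.1.le, hr.2⟩
    have h2 : derivWithin (derivWithin (fun _ : ℝ => (1:ℂ)) (Set.Icc 0 1)) (Set.Icc 0 1) r = 0 := by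
      rw [derivWithin_congr (fun x hx => hdc x hx) (hdc r hrm)]
      exact congrFun (derivWithin_const _ _) r
    rw [hint, hdc r hrm, h2]
    simp
  · exact hdc 0 (by norm_num)
  · rw [hint, hdc 1 (by norm_num)]; simp
  · intro h
    have := h.2.2.1 0 (by norm_num)
    simp at this

lemma derivWithin_P0 (l : ℂ) {r : ℝ} (hr : r ∈ Set.Icc (0:ℝ) 1) :
    derivWithin (P0 l) (Set.Icc 0 1) r = P1 l r := by
  rw [(hasDerivAt_P0 l r).differentiableAt.derivWithin (uniqueDiffOn_Icc one_pos r hr)]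
  exact (hasDerivAt_P0 l r).deriv

lemma derivWithin2_P0 (l : ℂ) {r : ℝ} (hr : r ∈ Set.Icc (0:ℝ) 1) :
    derivWithin (derivWithin (P0 l) (Set.Icc 0 1)) (Set.Icc 0 1) r = P2 l r := by
  rw [derivWithin_congr (fun x hx => derivWithin_P0 l hx) (derivWithin_P0 l hr)]
  rw [(hasDerivAt_P1 l r).differentiableAt.derivWithin (uniqueDiffOn_Icc one_pos r hr)]
  exact (hasDerivAt_P1 l r).deriv

lemma integral_expr_P0 {l : ℂ} (hl : l ≠ 0) :
    (∫ r in (0:ℝ)..1, (r : ℂ) ^ 2 * derivWithin (P0 l) (Set.Icc 0 1) r)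
      = P0 l 1 - 2 * besselJ 1 l / l := by
  rw [intervalIntegral.integral_congr (g := fun r => (r : ℂ) ^ 2 * P1 l r)]
  · exact integral_r2P1 hl
  · intro r hr
    rw [Set.uIcc_of_le (by norm_num : (0:ℝ) ≤ 1)] at hr
    show (r : ℂ) ^ 2 * derivWithin (P0 l) (Set.Icc 0 1) r = (r : ℂ) ^ 2 * P1 l r
    rw [derivWithin_P0 l hr]

lemma backward_construct {β₀ γ₀ : ℝ} (hβ : β₀ ≠ 0) {l : ℂ} (hl : l ≠ 0)
    (h : l * besselJ 0 l = ((γ₀ : ℂ) - (β₀ : ℂ) * l ^ 2) * besselJ 1 l) :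
    IsEigenvalueK β₀ γ₀ l := by
  have hβc : (β₀ : ℂ) ≠ 0 := Complex.ofReal_ne_zero.mpr hβ
  have h2 : l⁻¹ * l = 1 := inv_mul_cancel₀ hl
  have hβ2 : (β₀:ℂ)⁻¹ * (β₀:ℂ) = 1 := inv_mul_cancel₀ hβc
  have hP01 : P0 l 1 = besselJ 0 l := by
    rw [P0_eq_besselJ]; norm_num
  refine ⟨besselJ 1 l,
    (β₀ : ℂ) * l * besselJ 1 l + (P0 l 1 - 2 * besselJ 1 l / l),
    P0 l, fun r => l * P0 l r - 2 * besselJ 1 l,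
    (contDiff_P0 l).contDiffOn, ?_, ?_, ?_, ?_, ?_, ?_, ?_, ?_⟩
  · exact (((contDiff_const.mul (contDiff_P0 l)).sub contDiff_const).of_le
      (by norm_num)).contDiffOn
  · rw [integral_expr_P0 hl]
    linear_combination (l * besselJ 1 l) * hβ2
  · have e1 : (∫ r in (0:ℝ)..1, (r : ℂ) * (l * P0 l r - 2 * besselJ 1 l))
        = l * (besselJ 1 l / l) - 2 * besselJ 1 l * (1 / 2) := by
      have efun : (fun r : ℝ => (r : ℂ) * (l * P0 l r - 2 * besselJ 1 l))
          = fun r : ℝ => l * ((r : ℂ) * P0 l r) - 2 * besselJ 1 l * (r : ℂ) := by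
        funext r; ring
      rw [efun]
      rw [intervalIntegral.integral_sub]
      · rw [intervalIntegral.integral_const_mul, intervalIntegral.integral_const_mul,
          integral_rP0 hl, integral_ofReal01]
      · exact ((continuous_const.mul
          (Complex.continuous_ofReal.mul (continuous_P0 l))).intervalIntegrable 0 1)
      · exact ((continuous_const.mul Complex.continuous_ofReal).intervalIntegrable 0 1)
    rw [e1, hP01]
    linear_combination -h
  · intro r hr
    ring
  · intro r hr
    have hrm : r ∈ Set.Icc (0:ℝ) 1 := ⟨hr.1.le, hr.2⟩
    rw [derivWithin2_P0 l hrm, derivWithin_P0 l hrm, integral_expr_P0 hl]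
    have hode := P_ode l (ne_of_gt hr.1)
    linear_combination -hode + (-(2 * l * besselJ 1 l)) * hβ2
  · rw [derivWithin_P0 l (by norm_num : (0:ℝ) ∈ Set.Icc (0:ℝ) 1)]
    simp [P1]
  · rw [derivWithin_P0 l (by norm_num : (1:ℝ) ∈ Set.Icc (0:ℝ) 1), integral_expr_P0 hl]
    have hbj : besselJ 1 l = l / 2 * g1 (l ^ 2) := besselJ_one_eq l
    have hP11 : P1 l 1 = -(l ^ 2 / 2) * g1 (l ^ 2) := by
      rw [P1]; norm_num
    rw [hP11, hbj]
    linear_combination (l * (l / 2) * g1 (l ^ 2)) * hβ2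
  · intro hcon
    have := hcon.2.2.1 0 (by norm_num)
    rw [P0] at this
    norm_num [g0_zero] at this

/-! ### Forward direction: general facts about `phi` -/

lemma phi'_contDiffOn {phi : ℝ → ℂ} (hphi : ContDiffOn ℝ 2 phi (Set.Icc 0 1)) :
    ContDiffOn ℝ 1 (derivWithin phi (Set.Icc 0 1)) (Set.Icc 0 1) :=
  hphi.derivWithin (uniqueDiffOn_Icc one_pos) (by norm_num)

lemma phi_hasDerivWithinAt {phi : ℝ → ℂ} (hphi : ContDiffOn ℝ 2 phi (Set.Icc 0 1))
    {t : ℝ} (ht : t ∈ Set.Icc (0:ℝ) 1) :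
    HasDerivWithinAt phi (derivWithin phi (Set.Icc 0 1) t) (Set.Icc 0 1) t :=
  ((hphi.differentiableOn (by norm_num)) t ht).hasDerivWithinAt

lemma phi'_hasDerivWithinAt {phi : ℝ → ℂ} (hphi : ContDiffOn ℝ 2 phi (Set.Icc 0 1))
    {t : ℝ} (ht : t ∈ Set.Icc (0:ℝ) 1) :
    HasDerivWithinAt (derivWithin phi (Set.Icc 0 1))
      (derivWithin (derivWithin phi (Set.Icc 0 1)) (Set.Icc 0 1) t) (Set.Icc 0 1) t :=
  (((phi'_contDiffOn hphi).differentiableOn (by norm_num)) t ht).hasDerivWithinAt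

lemma phi_hasDerivAt_interior {phi : ℝ → ℂ} (hphi : ContDiffOn ℝ 2 phi (Set.Icc 0 1))
    {t : ℝ} (ht : t ∈ Set.Ioo (0:ℝ) 1) :
    HasDerivAt phi (derivWithin phi (Set.Icc 0 1) t) t := by
  have hmem : Set.Icc (0:ℝ) 1 ∈ 𝓝 t := Icc_mem_nhds ht.1 ht.2
  exact (phi_hasDerivWithinAt hphi (Set.Ioo_subset_Icc_self ht)).hasDerivAt hmem

lemma phi'_hasDerivAt_interior {phi : ℝ → ℂ} (hphi : ContDiffOn ℝ 2 phi (Set.Icc 0 1))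
    {t : ℝ} (ht : t ∈ Set.Ioo (0:ℝ) 1) :
    HasDerivAt (derivWithin phi (Set.Icc 0 1))
      (derivWithin (derivWithin phi (Set.Icc 0 1)) (Set.Icc 0 1) t) t := by
  have hmem : Set.Icc (0:ℝ) 1 ∈ 𝓝 t := Icc_mem_nhds ht.1 ht.2
  exact (phi'_hasDerivWithinAt hphi (Set.Ioo_subset_Icc_self ht)).hasDerivAt hmem

lemma myIcc_mem_nhdsWithin_Iic {t : ℝ} (ht : t ∈ Set.Ioc (0:ℝ) 1) :
    Set.Icc (0:ℝ) 1 ∈ 𝓝[Set.Iic t] t := by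
  apply mem_nhdsWithin.mpr
  exact ⟨Set.Ioi 0, isOpen_Ioi, ht.1, fun x hx => ⟨le_of_lt hx.1, le_trans hx.2 ht.2⟩⟩

lemma phi_hasDerivWithinAt_Iic {phi : ℝ → ℂ} (hphi : ContDiffOn ℝ 2 phi (Set.Icc 0 1))
    {t : ℝ} (ht : t ∈ Set.Ioc (0:ℝ) 1) :
    HasDerivWithinAt phi (derivWithin phi (Set.Icc 0 1) t) (Set.Iic t) t :=
  (phi_hasDerivWithinAt hphi ⟨ht.1.le, ht.2⟩).mono_of_mem_nhdsWithin (myIcc_mem_nhdsWithin_Iic ht)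

lemma phi'_hasDerivWithinAt_Iic {phi : ℝ → ℂ} (hphi : ContDiffOn ℝ 2 phi (Set.Icc 0 1))
    {t : ℝ} (ht : t ∈ Set.Ioc (0:ℝ) 1) :
    HasDerivWithinAt (derivWithin phi (Set.Icc 0 1))
      (derivWithin (derivWithin phi (Set.Icc 0 1)) (Set.Icc 0 1) t) (Set.Iic t) t :=
  (phi'_hasDerivWithinAt hphi ⟨ht.1.le, ht.2⟩).mono_of_mem_nhdsWithin (myIcc_mem_nhdsWithin_Iic ht)

/-! ### The Wronskian argument -/

lemma continuousOn_phi' {phi : ℝ → ℂ} (hphi : ContDiffOn ℝ 2 phi (Set.Icc 0 1)) :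
    ContinuousOn (derivWithin phi (Set.Icc 0 1)) (Set.Icc (0:ℝ) 1) :=
  (phi'_contDiffOn hphi).continuousOn

lemma wronskian_rel (lam : ℂ) (phi : ℝ → ℂ) (hphi : ContDiffOn ℝ 2 phi (Set.Icc 0 1))
    (hode : ∀ r ∈ Set.Ioc (0:ℝ) 1,
      derivWithin (derivWithin phi (Set.Icc 0 1)) (Set.Icc 0 1) r
        = -(r:ℂ)⁻¹ * derivWithin phi (Set.Icc 0 1) r - lam ^ 2 * phi r) :
    derivWithin phi (Set.Icc 0 1) 1 * P0 lam 1 = phi 1 * P1 lam 1 := by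
  set φ' := derivWithin phi (Set.Icc 0 1) with hφ'
  set W : ℝ → ℂ := fun r => (r : ℂ) * (φ' r * P0 lam r - phi r * P1 lam r) with hWdef
  have Wcont : ContinuousOn W (Set.Icc (0:ℝ) 1) := by
    apply ContinuousOn.mul Complex.continuous_ofReal.continuousOn
    exact (((continuousOn_phi' hphi).mul (continuous_P0 lam).continuousOn).sub
      (hphi.continuousOn.mul (continuous_P1 lam).continuousOn))
  have key : ∀ x ∈ Set.Ioc (0:ℝ) 1, W 1 = W x := by
    intro x hx
    have hconst := constant_of_has_deriv_right_zero (f := W) (a := x) (b := 1)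
      (Wcont.mono (Set.Icc_subset_Icc hx.1.le le_rfl)) ?_
    · exact hconst 1 ⟨hx.2, le_rfl⟩
    · intro t htm
      have ht : t ∈ Set.Ioo (0:ℝ) 1 := ⟨lt_of_lt_of_le hx.1 htm.1, htm.2⟩
      apply HasDerivAt.hasDerivWithinAt
      have h1 := phi_hasDerivAt_interior hphi ht
      have h2 := phi'_hasDerivAt_interior hphi ht
      have h3 := hasDerivAt_P0 lam t
      have h4 := hasDerivAt_P1 lam t
      have h5 := hasDerivAt_ofReal t
      have hmul := h5.mul ((h2.mul h3).sub (h1.mul h4))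
      have hval : (1:ℂ) * (φ' t * P0 lam t - phi t * P1 lam t)
          + (t:ℂ) * ((derivWithin φ' (Set.Icc 0 1) t * P0 lam t + φ' t * P1 lam t)
              - (φ' t * P1 lam t + phi t * P2 lam t)) = 0 := by
        rw [hφ', hode t ⟨ht.1, ht.2.le⟩]
        have hP := P_ode lam (ne_of_gt ht.1)
        have htinv : (t:ℂ)⁻¹ * (t:ℂ) = 1 :=
          inv_mul_cancel₀ (Complex.ofReal_ne_zero.mpr (ne_of_gt ht.1))
        linear_combination (-(t:ℂ) * phi t) * hP
          + (phi t * P1 lam t - derivWithin phi (Set.Icc 0 1) t * P0 lam t) * htinv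
      have h0 : (0:ℂ) = (1:ℂ) * (φ' t * P0 lam t - phi t * P1 lam t)
          + (t:ℂ) * ((derivWithin φ' (Set.Icc 0 1) t * P0 lam t + φ' t * P1 lam t)
              - (φ' t * P1 lam t + phi t * P2 lam t)) := hval.symm
      rw [hWdef, h0]
      exact hmul
  have hW0 : W 0 = 0 := by simp [hWdef]
  have hlim1 : Tendsto W (𝓝[Set.Ioc (0:ℝ) 1] 0) (𝓝 (W 0)) :=
    (Wcont 0 (by norm_num)).mono Set.Ioc_subset_Icc_self
  have hlim2 : Tendsto W (𝓝[Set.Ioc (0:ℝ) 1] 0) (𝓝 (W 1)) := by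
    have hc : Tendsto (fun _ : ℝ => W 1) (𝓝[Set.Ioc (0:ℝ) 1] 0) (𝓝 (W 1)) := tendsto_const_nhds
    apply hc.congr'
    filter_upwards [self_mem_nhdsWithin] with x hx using key x hx
  haveI := left_nhdsWithin_Ioc_neBot (show (0:ℝ) < 1 by norm_num)
  have hW1 : W 1 = 0 := by rw [← hW0]; exact tendsto_nhds_unique hlim2 hlim1
  have hfin : (1:ℂ) * (φ' 1 * P0 lam 1 - phi 1 * P1 lam 1) = 0 := by
    have := hW1
    rw [hWdef] at this
    simpa using this
  rw [one_mul, sub_eq_zero] at hfin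
  exact hfin

/-! ### Uniqueness for the ODE -/

lemma ode_unique (lam : ℂ) (phi : ℝ → ℂ) (hphi : ContDiffOn ℝ 2 phi (Set.Icc 0 1))
    (hode : ∀ r ∈ Set.Ioc (0:ℝ) 1,
      derivWithin (derivWithin phi (Set.Icc 0 1)) (Set.Icc 0 1) r
        = -(r:ℂ)⁻¹ * derivWithin phi (Set.Icc 0 1) r - lam ^ 2 * phi r)
    (h1 : phi 1 = 0) (h1' : derivWithin phi (Set.Icc 0 1) 1 = 0) :
    ∀ r ∈ Set.Icc (0:ℝ) 1, phi r = 0 := by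
  set φ' := derivWithin phi (Set.Icc 0 1) with hφ'
  have step1 : ∀ ε ∈ Set.Ioc (0:ℝ) 1, ∀ r ∈ Set.Icc ε 1, phi r = 0 := by
    intro ε hε
    have hε0 : (0:ℝ) < ε := hε.1
    set v : ℝ → (ℂ × ℂ) → (ℂ × ℂ) := fun t x =>
      (x.2, -(((max ε t : ℝ) : ℂ))⁻¹ * x.2 - lam ^ 2 * x.1) with hv_def
    set K : NNReal := ⟨1 + ε⁻¹ + ‖lam ^ 2‖, by positivity⟩ with hK
    have hv : ∀ t, LipschitzWith K (v t) := by
      intro t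
      apply LipschitzWith.of_dist_le_mul
      intro x y
      have hc : ‖(((max ε t : ℝ) : ℂ))⁻¹‖ ≤ ε⁻¹ := by
        rw [norm_inv, Complex.norm_real, Real.norm_eq_abs,
          abs_of_pos (lt_of_lt_of_le hε0 (le_max_left _ _))]
        exact inv_anti₀ hε0 (le_max_left _ _)
      have h2 : dist x.2 y.2 ≤ dist x y := le_max_right _ _
      have h1d : dist x.1 y.1 ≤ dist x y := le_max_left _ _
      have hdn : (0:ℝ) ≤ dist x y := dist_nonneg
      rw [Prod.dist_eq]
      apply max_le
      · show dist x.2 y.2 ≤ K * dist x y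
        calc dist x.2 y.2 ≤ dist x y := h2
          _ ≤ K * dist x y := by
              apply le_mul_of_one_le_left hdn
              rw [hK]
              show (1:ℝ) ≤ 1 + ε⁻¹ + ‖lam ^ 2‖
              have : (0:ℝ) ≤ ε⁻¹ := by positivity
              have := norm_nonneg (lam ^ 2)
              linarith
      · show dist (-(((max ε t : ℝ):ℂ))⁻¹ * x.2 - lam ^ 2 * x.1)
            (-(((max ε t : ℝ):ℂ))⁻¹ * y.2 - lam ^ 2 * y.1) ≤ K * dist x y
        rw [dist_eq_norm]
        have e : (-(((max ε t : ℝ):ℂ))⁻¹ * x.2 - lam ^ 2 * x.1)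
            - (-(((max ε t : ℝ):ℂ))⁻¹ * y.2 - lam ^ 2 * y.1)
            = (-(((max ε t : ℝ):ℂ))⁻¹) * (x.2 - y.2) + (-(lam ^ 2)) * (x.1 - y.1) := by
          ring
        rw [e]
        calc ‖(-(((max ε t : ℝ):ℂ))⁻¹) * (x.2 - y.2) + (-(lam ^ 2)) * (x.1 - y.1)‖
            ≤ ‖(-(((max ε t : ℝ):ℂ))⁻¹) * (x.2 - y.2)‖ + ‖(-(lam ^ 2)) * (x.1 - y.1)‖ :=
              norm_add_le _ _
          _ = ‖(((max ε t : ℝ):ℂ))⁻¹‖ * ‖x.2 - y.2‖ + ‖lam ^ 2‖ * ‖x.1 - y.1‖ := by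
              rw [norm_mul, norm_mul, norm_neg, norm_neg]
          _ ≤ ε⁻¹ * dist x y + ‖lam ^ 2‖ * dist x y := by
              apply add_le_add
              · apply mul_le_mul hc _ (norm_nonneg _) (by positivity)
                rw [← dist_eq_norm]; exact h2
              · apply mul_le_mul_of_nonneg_left _ (norm_nonneg _)
                rw [← dist_eq_norm]; exact h1d
          _ ≤ K * dist x y := by
              rw [hK]
              show ε⁻¹ * dist x y + ‖lam ^ 2‖ * dist x y ≤ (1 + ε⁻¹ + ‖lam ^ 2‖) * dist x y
              nlinarith
    have hsub : Set.Icc ε 1 ⊆ Set.Icc (0:ℝ) 1 := Set.Icc_subset_Icc hε0.le le_rfl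
    have hf : ContinuousOn (fun t => (phi t, φ' t)) (Set.Icc ε 1) :=
      (hphi.continuousOn.mono hsub).prodMk ((continuousOn_phi' hphi).mono hsub)
    have hf' : ∀ t ∈ Set.Ioc ε 1,
        HasDerivWithinAt (fun t => (phi t, φ' t)) (v t (phi t, φ' t)) (Set.Iic t) t := by
      intro t ht
      have ht01 : t ∈ Set.Ioc (0:ℝ) 1 := ⟨lt_trans hε0 ht.1, ht.2⟩
      have hp := phi_hasDerivWithinAt_Iic hphi ht01
      have hq := phi'_hasDerivWithinAt_Iic hphi ht01
      have hpair := HasDerivWithinAt.prodMk hp hq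
      have hveq : v t (phi t, φ' t) = (φ' t, derivWithin φ' (Set.Icc 0 1) t) := by
        rw [hv_def]
        simp only
        rw [max_eq_right ht.1.le, hode t ht01]
      rw [hveq]
      exact hpair
    have hg' : ∀ t ∈ Set.Ioc ε 1,
        HasDerivWithinAt (fun _ : ℝ => ((0:ℂ), (0:ℂ))) (v t ((0:ℂ), (0:ℂ))) (Set.Iic t) t := by
      intro t ht
      have : v t ((0:ℂ), (0:ℂ)) = ((0:ℂ), (0:ℂ)) := by
        rw [hv_def]; simp
      rw [this]
      exact hasDerivWithinAt_const t _ _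
    have hb : (fun t => (phi t, φ' t)) 1 = (fun _ : ℝ => ((0:ℂ), (0:ℂ))) 1 := by
      simp only
      rw [h1, h1']
    have := ODE_solution_unique_of_mem_Icc_left (v := v) (s := fun _ => Set.univ) (K := K)
      (fun t _ => (hv t).lipschitzOnWith) hf hf' (fun _ _ => trivial)
      continuousOn_const hg' (fun _ _ => trivial) hb
    intro r hr
    have := this hr
    exact congrArg Prod.fst this
  intro r hr
  rcases eq_or_lt_of_le hr.1 with h0 | h0
  · subst h0
    have hz : ∀ x ∈ Set.Ioc (0:ℝ) 1, phi x = 0 := fun x hx => step1 x hx x ⟨le_rfl, hx.2⟩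
    have hlim1 : Tendsto phi (𝓝[Set.Ioc (0:ℝ) 1] 0) (𝓝 (phi 0)) :=
      (hphi.continuousOn 0 (by norm_num)).mono Set.Ioc_subset_Icc_self
    have hlim2 : Tendsto phi (𝓝[Set.Ioc (0:ℝ) 1] 0) (𝓝 0) := by
      have hc : Tendsto (fun _ : ℝ => (0:ℂ)) (𝓝[Set.Ioc (0:ℝ) 1] 0) (𝓝 0) := tendsto_const_nhds
      apply hc.congr'
      filter_upwards [self_mem_nhdsWithin] with x hx using (hz x hx).symm
    haveI := left_nhdsWithin_Ioc_neBot (show (0:ℝ) < 1 by norm_num)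
    exact tendsto_nhds_unique hlim1 hlim2
  · exact step1 r ⟨h0, hr.2⟩ r ⟨le_rfl, hr.2⟩

/-! ### Integration by parts for abstract `phi` -/

lemma integral_ibp {phi : ℝ → ℂ} (hphi : ContDiffOn ℝ 2 phi (Set.Icc 0 1)) :
    (∫ r in (0:ℝ)..1, (r:ℂ)^2 * derivWithin phi (Set.Icc 0 1) r)
      = phi 1 - 2 * ∫ r in (0:ℝ)..1, (r:ℂ) * phi r := by
  have huIcc : Set.uIcc (0:ℝ) 1 = Set.Icc 0 1 := Set.uIcc_of_le (by norm_num)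
  have hphic := hphi.continuousOn
  have hφ'c := continuousOn_phi' hphi
  have hint1 : IntervalIntegrable (fun r : ℝ => 2*(r:ℂ)*phi r) MeasureTheory.volume 0 1 := by
    apply ContinuousOn.intervalIntegrable
    rw [huIcc]
    exact ((continuous_const.mul Complex.continuous_ofReal).continuousOn).mul hphic
  have hint2 : IntervalIntegrable (fun r : ℝ => (r:ℂ)^2 * derivWithin phi (Set.Icc 0 1) r)
      MeasureTheory.volume 0 1 := by
    apply ContinuousOn.intervalIntegrable
    rw [huIcc]
    exact ((Complex.continuous_ofReal.pow 2).continuousOn).mul hφ'c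
  have hint3 : IntervalIntegrable (fun r : ℝ => (r:ℂ) * phi r) MeasureTheory.volume 0 1 := by
    apply ContinuousOn.intervalIntegrable
    rw [huIcc]
    exact (Complex.continuous_ofReal.continuousOn).mul hphic
  have hFTC := intervalIntegral.integral_eq_sub_of_hasDeriv_right_of_le (a := (0:ℝ)) (b := 1)
    (f := fun r : ℝ => (r:ℂ)^2 * phi r)
    (f' := fun r : ℝ => 2*(r:ℂ)*phi r + (r:ℂ)^2 * derivWithin phi (Set.Icc 0 1) r)
    (by norm_num)
    (((Complex.continuous_ofReal.pow 2).continuousOn).mul hphic)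
    ?_ (hint1.add hint2)
  · have hsplit := intervalIntegral.integral_add hint1 hint2
    rw [hsplit] at hFTC
    have h2P : (∫ r in (0:ℝ)..1, 2*(r:ℂ)*phi r) = 2 * ∫ r in (0:ℝ)..1, (r:ℂ) * phi r := by
      have e : (fun r : ℝ => 2*(r:ℂ)*phi r) = fun r : ℝ => 2*((r:ℂ)*phi r) := by
        funext r; ring
      rw [e, intervalIntegral.integral_const_mul]
    rw [h2P] at hFTC
    have : ((1:ℝ):ℂ)^2 * phi 1 - ((0:ℝ):ℂ)^2 * phi 0 = phi 1 := by push_cast; ring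
    rw [this] at hFTC
    linear_combination hFTC
  · intro t ht
    have hsq : HasDerivAt (fun t : ℝ => ((t:ℂ))^2) (2*(t:ℂ)) t := by
      have e : (fun t : ℝ => ((t:ℂ))^2) = fun t : ℝ => (t:ℂ) * (t:ℂ) := by
        funext u; ring
      rw [e]
      have := (hasDerivAt_ofReal t).mul (hasDerivAt_ofReal t)
      exact this.congr_deriv (by ring)
    have hp := phi_hasDerivAt_interior hphi ht
    exact (hsq.mul hp).hasDerivWithinAt (s := Set.Ioi t)

lemma integral_zeta_eq {zeta phi : ℝ → ℂ} {lam η : ℂ}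
    (hphic : ContinuousOn phi (Set.Icc (0:ℝ) 1))
    (he3 : ∀ r ∈ Set.Icc (0:ℝ) 1, zeta r + 2 * η = lam * phi r) :
    (∫ r in (0:ℝ)..1, (r:ℂ) * zeta r)
      = lam * (∫ r in (0:ℝ)..1, (r:ℂ) * phi r) - η := by
  have huIcc : Set.uIcc (0:ℝ) 1 = Set.Icc 0 1 := Set.uIcc_of_le (by norm_num)
  rw [intervalIntegral.integral_congr
    (g := fun r : ℝ => lam * ((r:ℂ) * phi r) - 2 * η * (r:ℂ))]
  · rw [intervalIntegral.integral_sub]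
    · rw [intervalIntegral.integral_const_mul, intervalIntegral.integral_const_mul,
        integral_ofReal01]
      ring
    · apply ContinuousOn.intervalIntegrable
      rw [huIcc]
      exact continuous_const.continuousOn.mul
        ((Complex.continuous_ofReal.continuousOn).mul hphic)
    · exact ((continuous_const.mul Complex.continuous_ofReal).intervalIntegrable 0 1)
  · intro r hr
    rw [huIcc] at hr
    show (r:ℂ) * zeta r = lam * ((r:ℂ) * phi r) - 2 * η * (r:ℂ)
    have := he3 r hr
    linear_combination (r:ℂ) * this


/-- A complex number `λ` is an eigenvalue of the linearised operator `K` if and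
only if `λ J₀(λ) = (γ₀ − β₀ λ²) J₁(λ)`, where `γ₀ = α₀ − β₀`. -/
theorem eigenvalue_iff_besselJ (β₀ α₀ : ℝ) (hβ₀ : 0 < β₀) (lam : ℂ) :
    IsEigenvalueK β₀ (α₀ - β₀) lam ↔
      lam * besselJ 0 lam = (((α₀ - β₀ : ℝ) : ℂ) - (β₀ : ℂ) * lam ^ 2) * besselJ 1 lam := by
  constructor
  · intro hev
    by_cases hlam : lam = 0
    · subst hlam
      rw [besselJ_one_zero]
      ring
    obtain ⟨η, ω, phi, zeta, hphi, hzeta, e1, e2, e3, e4, e5, e6, hnz⟩ := hev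
    have hβc : (β₀:ℂ) ≠ 0 := Complex.ofReal_ne_zero.mpr (ne_of_gt hβ₀)
    have hb : (β₀:ℂ) * (β₀:ℂ)⁻¹ = 1 := mul_inv_cancel₀ hβc
    have hIexp := integral_ibp hphi
    have hζint := integral_zeta_eq hphi.continuousOn e3
    have hωI : ω - (∫ r in (0:ℝ)..1, (r:ℂ)^2 * derivWithin phi (Set.Icc 0 1) r)
        = (β₀:ℂ) * (lam * η) := by
      linear_combination (β₀:ℂ) * e1
        + (-(ω - (∫ r in (0:ℝ)..1, (r:ℂ)^2 * derivWithin phi (Set.Icc 0 1) r))) * hb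
    have hode : ∀ r ∈ Set.Ioc (0:ℝ) 1,
        derivWithin (derivWithin phi (Set.Icc 0 1)) (Set.Icc 0 1) r
          = -(r:ℂ)⁻¹ * derivWithin phi (Set.Icc 0 1) r - lam ^ 2 * phi r := by
      intro r hr
      have h3 := e3 r ⟨hr.1.le, hr.2⟩
      have h4 := e4 r hr
      linear_combination (-1) * h4 - lam * h3 - 2 * e1
    have heq1 : derivWithin phi (Set.Icc 0 1) 1 = -(lam * η) := by
      linear_combination e6 - e1
    have hw := wronskian_rel lam phi hphi hode
    have hP01 : P0 lam 1 = besselJ 0 lam := by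
      rw [P0_eq_besselJ]; norm_num
    have hP11 : P1 lam 1 = -lam * besselJ 1 lam := by
      rw [P1, besselJ_one_eq]
      norm_num
      ring
    have hgf : η * besselJ 0 lam = phi 1 * besselJ 1 lam := by
      rw [heq1, hP01, hP11] at hw
      have h2 : lam * (η * besselJ 0 lam - phi 1 * besselJ 1 lam) = 0 := by
        linear_combination -hw
      rcases mul_eq_zero.mp h2 with h' | h'
      · exact absurd h' hlam
      · exact sub_eq_zero.mp h'
    have hsc : lam * phi 1 = (((α₀ - β₀ : ℝ) : ℂ) - (β₀:ℂ) * lam ^ 2) * η := by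
      linear_combination (-1) * e2 - 2 * hζint - lam * hωI - lam * hIexp
    by_cases hη : η = 0
    · have hphi1 : phi 1 = 0 := by
        have h2 : lam * phi 1 = 0 := by
          rw [hη] at hsc
          linear_combination hsc
        rcases mul_eq_zero.mp h2 with h' | h'
        · exact absurd h' hlam
        · exact h'
      have hφ'1 : derivWithin phi (Set.Icc 0 1) 1 = 0 := by
        rw [heq1, hη]; ring
      have hz := ode_unique lam phi hphi hode hphi1 hφ'1
      have hzeta0 : ∀ r ∈ Set.Icc (0:ℝ) 1, zeta r = 0 := by
        intro r hr
        have h3 := e3 r hr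
        rw [hz r hr, hη] at h3
        linear_combination h3
      have hPv : (∫ r in (0:ℝ)..1, (r:ℂ) * phi r) = 0 := by
        rw [intervalIntegral.integral_congr (g := fun _ => (0:ℂ))]
        · simp
        · intro r hr
          rw [Set.uIcc_of_le (by norm_num : (0:ℝ) ≤ 1)] at hr
          show (r:ℂ) * phi r = 0
          rw [hz r hr]; ring
      have hω0 : ω = 0 := by
        linear_combination hωI + hIexp + hphi1 + (-2) * hPv + ((β₀:ℂ) * lam) * hη
      exact absurd ⟨hη, hω0, hz, hzeta0⟩ hnz
    · have hkey : η * (lam * besselJ 0 lam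
          - (((α₀ - β₀ : ℝ) : ℂ) - (β₀:ℂ) * lam ^ 2) * besselJ 1 lam) = 0 := by
        linear_combination lam * hgf + besselJ 1 lam * hsc
      rcases mul_eq_zero.mp hkey with h' | h'
      · exact absurd h' hη
      · exact sub_eq_zero.mp h'
  · intro h
    by_cases hlam : lam = 0
    · subst hlam
      exact backward_lam_zero β₀ (α₀ - β₀)
    · exact backward_construct (ne_of_gt hβ₀) hlam h
end
end

section
/- Define g : (0, ∞) → ℝ by g(λ) = (λ⁻¹ − λ/sinh²λ)/(coth λ − λ⁻¹). Then g is strictly decreasing on (0, ∞), g(λ) → 1 as λ → 0⁺ and g(λ) → 0 as λ → ∞. Consequently, for every α₀ > 6 the equation g(λ) = 6/α₀ has a unique solution λ⋆(α₀) ∈ (0, ∞). (For the Langevin magnetisation law with parameter λ one has m₁′(1) = g(λ), so λ⋆(α₀) is the unique parameter value at which α₀ m₁′(1) = 6.) -/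
open Filter Topology Set

noncomputable section

/-- `g(λ) = (λ⁻¹ − λ/sinh²λ)/(coth λ − λ⁻¹)`, the value of `m₁′(1)` for the
Langevin magnetisation law with parameter `λ`. -/
def langevinDeriv (x : ℝ) : ℝ :=
  (x⁻¹ - x / (Real.sinh x) ^ 2) / (Real.cosh x / Real.sinh x - x⁻¹)

/-- The Langevin magnetisation law with parameter `λ > 0`. -/
def langevinLaw (lam s : ℝ) : ℝ :=
  (Real.cosh (lam * s) / Real.sinh (lam * s) - (lam * s)⁻¹) /
    (Real.cosh lam / Real.sinh lam - lam⁻¹)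

set_option linter.unusedTactic false
set_option linter.unreachableTactic false

namespace LangevinAux

/-- Shape of functions in the derivative chain. -/
def P (p₀ p₁ p₂ p₃ q₀ q₁ q₂ q₃ u v w z : ℝ) : ℝ → ℝ := fun t =>
  (p₀ + p₁*t + p₂*t^2 + p₃*t^3) * Real.cosh t
    + (q₀ + q₁*t + q₂*t^2 + q₃*t^3) * Real.sinh t
    + u * Real.cosh (2*t) + v * Real.sinh (2*t) + w*t + z

lemma hasDerivAt_P (p₀ p₁ p₂ p₃ q₀ q₁ q₂ q₃ u v w z t : ℝ) :
    HasDerivAt (P p₀ p₁ p₂ p₃ q₀ q₁ q₂ q₃ u v w z)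
      (P (p₁+q₀) (2*p₂+q₁) (3*p₃+q₂) q₃ (p₀+q₁) (p₁+2*q₂) (p₂+3*q₃) p₃
        (2*v) (2*u) 0 w t) t := by
  have hid : HasDerivAt (fun t : ℝ => t) 1 t := hasDerivAt_id t
  have h2 : HasDerivAt (fun t : ℝ => t^2) (2*t) t := by simpa using hid.fun_pow 2
  have h3 : HasDerivAt (fun t : ℝ => t^3) (3*t^2) t := by
    simpa using hid.fun_pow 3
  have hp : HasDerivAt (fun t : ℝ => p₀ + p₁*t + p₂*t^2 + p₃*t^3)
      (p₁ + 2*p₂*t + 3*p₃*t^2) t := by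
    have h := (((hid.const_mul p₁).fun_add (h2.const_mul p₂)).fun_add (h3.const_mul p₃)).const_add p₀
    have h' := h.congr_of_eventuallyEq (Filter.Eventually.of_forall
      (fun x => by ring : ∀ x : ℝ, p₀ + p₁*x + p₂*x^2 + p₃*x^3
        = p₀ + (p₁ * x + p₂ * x ^ 2 + p₃ * x ^ 3)))
    exact h'.congr_deriv (by ring)
  have hq : HasDerivAt (fun t : ℝ => q₀ + q₁*t + q₂*t^2 + q₃*t^3)
      (q₁ + 2*q₂*t + 3*q₃*t^2) t := by
    have h := (((hid.const_mul q₁).fun_add (h2.const_mul q₂)).fun_add (h3.const_mul q₃)).const_add q₀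
    have h' := h.congr_of_eventuallyEq (Filter.Eventually.of_forall
      (fun x => by ring : ∀ x : ℝ, q₀ + q₁*x + q₂*x^2 + q₃*x^3
        = q₀ + (q₁ * x + q₂ * x ^ 2 + q₃ * x ^ 3)))
    exact h'.congr_deriv (by ring)
  have hl : HasDerivAt (fun t : ℝ => 2*t) 2 t := by simpa using hid.const_mul 2
  have hc2 : HasDerivAt (fun t : ℝ => Real.cosh (2*t)) (Real.sinh (2*t) * 2) t :=
    (Real.hasDerivAt_cosh (2*t)).comp t hl
  have hs2 : HasDerivAt (fun t : ℝ => Real.sinh (2*t)) (Real.cosh (2*t) * 2) t :=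
    (Real.hasDerivAt_sinh (2*t)).comp t hl
  have hbig := (((((hp.fun_mul (Real.hasDerivAt_cosh t)).fun_add
      (hq.fun_mul (Real.hasDerivAt_sinh t))).fun_add
      (hc2.const_mul u)).fun_add (hs2.const_mul v)).fun_add
      ((hid.const_mul w))).add_const z
  have hbig' := hbig.congr_of_eventuallyEq (Filter.Eventually.of_forall
    (fun x => rfl : ∀ x : ℝ, P p₀ p₁ p₂ p₃ q₀ q₁ q₂ q₃ u v w z x
      = (p₀ + p₁*x + p₂*x^2 + p₃*x^3) * Real.cosh x
        + (q₀ + q₁*x + q₂*x^2 + q₃*x^3) * Real.sinh x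
        + u * Real.cosh (2*x) + v * Real.sinh (2*x) + w*x + z))
  exact hbig'.congr_deriv (by
  simp only [P]; ring)

lemma P_zero (p₀ p₁ p₂ p₃ q₀ q₁ q₂ q₃ u v w z : ℝ) :
    P p₀ p₁ p₂ p₃ q₀ q₁ q₂ q₃ u v w z 0 = p₀ + u + z := by
  simp [P]

lemma neg_chain {f g : ℝ → ℝ} (hfd : ∀ t, HasDerivAt f (g t) t) (h0 : f 0 = 0)
    (hg : ∀ t, 0 < t → g t < 0) : ∀ t, 0 < t → f t < 0 := by
  intro t ht
  have hanti : StrictAntiOn f (Ici 0) := by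
    apply strictAntiOn_of_deriv_neg (convex_Ici 0)
      (fun x _ => (hfd x).continuousAt.continuousWithinAt)
    intro x hx
    rw [interior_Ici] at hx
    rw [(hfd x).deriv]
    exact hg x hx
  have := hanti (self_mem_Ici) (le_of_lt ht) ht
  rwa [h0] at this

lemma nonneg_chain {f g : ℝ → ℝ} (hfd : ∀ t, HasDerivAt f (g t) t) (h0 : f 0 = 0)
    (hg : ∀ t, 0 < t → 0 ≤ g t) : ∀ t, 0 ≤ t → 0 ≤ f t := by
  intro t ht
  have hmono : MonotoneOn f (Ici 0) := by
    apply monotoneOn_of_deriv_nonneg (convex_Ici 0)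
      (fun x _ => (hfd x).continuousAt.continuousWithinAt)
      (fun x hx => (hfd x).differentiableAt.differentiableWithinAt)
    intro x hx
    rw [interior_Ici] at hx
    rw [(hfd x).deriv]
    exact hg x hx
  have := hmono self_mem_Ici ht ht
  rwa [h0] at this


lemma hd_congr {f g : ℝ → ℝ} {d d' : ℝ} {x : ℝ} (h : HasDerivAt f d x)
    (hfg : ∀ y, g y = f y) (hd : d' = d) : HasDerivAt g d' x :=
  hd ▸ h.congr_of_eventuallyEq (Filter.Eventually.of_forall hfg)

/-- Quartic lower bound for cosh. -/
lemma cosh_quartic {t : ℝ} (ht : 0 ≤ t) : 1 + t^2/2 + t^4/24 ≤ Real.cosh t := by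
  have hid : ∀ x : ℝ, HasDerivAt (fun t : ℝ => t) 1 x := fun x => hasDerivAt_id x
  have h1 : ∀ t : ℝ, 0 ≤ t → 0 ≤ Real.cosh t - 1 - t^2/2 := by
    apply nonneg_chain (g := fun t => Real.sinh t - t)
    · intro x
      exact hd_congr (((Real.hasDerivAt_cosh x).fun_sub
        (((hid x).fun_pow 2).div_const 2)).sub_const 1) (fun y => by ring) (by push_cast; ring)
    · simp
    · intro x hx; simpa using (Real.self_le_sinh_iff.2 hx.le)
  have h0 : ∀ t : ℝ, 0 ≤ t → 0 ≤ Real.sinh t - t - t^3/6 := by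
    apply nonneg_chain (g := fun t => Real.cosh t - 1 - t^2/2)
    · intro x
      exact hd_congr ((Real.hasDerivAt_sinh x).fun_sub
        ((hid x).fun_add (((hid x).fun_pow 3).div_const 6))) (fun y => by ring) (by push_cast; ring)
    · simp
    · intro x hx; exact h1 x hx.le
  have hm : ∀ t : ℝ, 0 ≤ t → 0 ≤ Real.cosh t - (1 + t^2/2 + t^4/24) := by
    apply nonneg_chain (g := fun t => Real.sinh t - t - t^3/6)
    · intro x
      exact hd_congr (((Real.hasDerivAt_cosh x).fun_sub
        ((((hid x).fun_pow 2).div_const 2).fun_add (((hid x).fun_pow 4).div_const 24))).sub_const 1)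
        (fun y => by ring) (by push_cast; ring)
    · simp
    · intro x hx; exact h0 x hx.le
  linarith [hm t ht]

lemma phi9_neg : ∀ t : ℝ, 0 < t → P 344 0 24 0 0 168 0 1 (-512) 0 0 0 t < 0 := by
  intro t ht
  have hc4 := cosh_quartic ht.le
  have hsc := Real.sinh_lt_cosh t
  have hs : 0 < Real.sinh t := Real.sinh_pos_iff.2 ht
  have hc1 : (1:ℝ) ≤ Real.cosh t := Real.one_le_cosh t
  simp only [P, Real.cosh_two_mul]
  set s := Real.sinh t with hsdef
  set c := Real.cosh t with hcdef
  have hcs : c^2 = s^2 + 1 := Real.cosh_sq t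
  have hA : (168*t+t^3)*s ≤ (168*t+t^3)*c :=
    mul_le_mul_of_nonneg_left hsc.le (by positivity)
  have hB : (512:ℝ) < 1024*(1 + t^2/2 + t^4/24) - (t^3+24*t^2+168*t+344) := by
    nlinarith [sq_nonneg (t^2 - t), sq_nonneg (t-1)]
  have hD : (1024*(1 + t^2/2 + t^4/24))*c ≤ (1024*c)*c :=
    mul_le_mul_of_nonneg_right (by linarith) (by linarith)
  have hC : (1024*(1 + t^2/2 + t^4/24) - (t^3+24*t^2+168*t+344))*1 ≤
      (1024*(1 + t^2/2 + t^4/24) - (t^3+24*t^2+168*t+344))*c :=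
    mul_le_mul_of_nonneg_left hc1 (by linarith)
  nlinarith [hA, hB, hC, hD, hcs]

lemma phi0_neg : ∀ t : ℝ, 0 < t → P 0 6 0 1 2 0 (-3) 0 0 (-1) (-6) 0 t < 0 := by
  have step : ∀ a b c d e f g h u v w z : ℝ, a + u + z = 0 →
      (∀ t : ℝ, 0 < t →
        P (b+e) (2*c+f) (3*d+g) h (a+f) (b+2*g) (c+3*h) d (2*v) (2*u) 0 w t < 0) →
      (∀ t : ℝ, 0 < t → P a b c d e f g h u v w z t < 0) := by
    intro a b c d e f g h u v w z h0 hnext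
    apply neg_chain (g := P (b+e) (2*c+f) (3*d+g) h (a+f) (b+2*g) (c+3*h) d (2*v) (2*u) 0 w)
      (fun t => hasDerivAt_P a b c d e f g h u v w z t)
    · rw [P_zero]; linarith
    · exact hnext
  have h9 := phi9_neg
  have h8 : ∀ t : ℝ, 0 < t → P 0 126 0 1 218 0 21 0 0 (-256) 0 0 t < 0 := by
    apply step _ _ _ _ _ _ _ _ _ _ _ _ (by norm_num)
    intro t ht; have := h9 t ht; norm_num; norm_num at this; convert this using 2 <;> norm_num
  have h7 : ∀ t : ℝ, 0 < t → P 128 0 18 0 0 90 0 1 (-128) 0 0 0 t < 0 := by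
    apply step _ _ _ _ _ _ _ _ _ _ _ _ (by norm_num)
    intro t ht; have := h8 t ht; norm_num; norm_num at this; convert this using 2 <;> norm_num
  have h6 : ∀ t : ℝ, 0 < t → P 0 60 0 1 68 0 15 0 0 (-64) 0 0 t < 0 := by
    apply step _ _ _ _ _ _ _ _ _ _ _ _ (by norm_num)
    intro t ht; have := h7 t ht; norm_num; norm_num at this; convert this using 2 <;> norm_num
  have h5 : ∀ t : ℝ, 0 < t → P 32 0 12 0 0 36 0 1 (-32) 0 0 0 t < 0 := by
    apply step _ _ _ _ _ _ _ _ _ _ _ _ (by norm_num)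
    intro t ht; have := h6 t ht; norm_num; norm_num at this; convert this using 2 <;> norm_num
  have h4 : ∀ t : ℝ, 0 < t → P 0 18 0 1 14 0 9 0 0 (-16) 0 0 t < 0 := by
    apply step _ _ _ _ _ _ _ _ _ _ _ _ (by norm_num)
    intro t ht; have := h5 t ht; norm_num; norm_num at this; convert this using 2 <;> norm_num
  have h3 : ∀ t : ℝ, 0 < t → P 8 0 6 0 0 6 0 1 (-8) 0 0 0 t < 0 := by
    apply step _ _ _ _ _ _ _ _ _ _ _ _ (by norm_num)
    intro t ht; have := h4 t ht; norm_num; norm_num at this; convert this using 2 <;> norm_num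
  have h2 : ∀ t : ℝ, 0 < t → P 0 0 0 1 8 0 3 0 0 (-4) 0 0 t < 0 := by
    apply step _ _ _ _ _ _ _ _ _ _ _ _ (by norm_num)
    intro t ht; have := h3 t ht; norm_num; norm_num at this; convert this using 2 <;> norm_num
  have h1 : ∀ t : ℝ, 0 < t → P 8 0 0 0 0 0 0 1 (-2) 0 0 (-6) t < 0 := by
    apply step _ _ _ _ _ _ _ _ _ _ _ _ (by norm_num)
    intro t ht; have := h2 t ht; norm_num; norm_num at this; convert this using 2 <;> norm_num
  apply step _ _ _ _ _ _ _ _ _ _ _ _ (by norm_num)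
  intro t ht; have := h1 t ht; norm_num; norm_num at this; convert this using 2 <;> norm_num

/-! ### The functions N and D and their derivative ladder -/

def Nf (x : ℝ) : ℝ := Real.sinh x ^ 2 - x ^ 2
def Df (x : ℝ) : ℝ := x * Real.sinh x * Real.cosh x - Real.sinh x ^ 2
def N1 (x : ℝ) : ℝ := 2 * Real.sinh x * Real.cosh x - 2 * x
def D1 (x : ℝ) : ℝ := x * Real.cosh x ^ 2 + x * Real.sinh x ^ 2 - Real.sinh x * Real.cosh x
def N2 (x : ℝ) : ℝ := 2 * Real.cosh x ^ 2 + 2 * Real.sinh x ^ 2 - 2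
def D2 (x : ℝ) : ℝ := 4 * x * Real.sinh x * Real.cosh x
def N3 (x : ℝ) : ℝ := 8 * Real.sinh x * Real.cosh x
def D3 (x : ℝ) : ℝ := 4 * Real.sinh x * Real.cosh x + 4 * x * Real.cosh x ^ 2
  + 4 * x * Real.sinh x ^ 2
def N4 (x : ℝ) : ℝ := 8 * Real.cosh x ^ 2 + 8 * Real.sinh x ^ 2
def D4 (x : ℝ) : ℝ := 8 * Real.cosh x ^ 2 + 8 * Real.sinh x ^ 2
  + 16 * x * Real.sinh x * Real.cosh x

lemma hN0 (x : ℝ) : HasDerivAt Nf (N1 x) x := by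
  refine hd_congr (((Real.hasDerivAt_sinh x).pow 2).sub ((hasDerivAt_id x).pow 2))
    (fun y => rfl) ?_
  simp only [N1, id_eq]; push_cast; ring

lemma hD0 (x : ℝ) : HasDerivAt Df (D1 x) x := by
  refine hd_congr ((((hasDerivAt_id x).fun_mul (Real.hasDerivAt_sinh x)).fun_mul
    (Real.hasDerivAt_cosh x)).fun_sub ((Real.hasDerivAt_sinh x).fun_pow 2)) (fun y => rfl) ?_
  simp only [D1, id_eq]; push_cast; ring

lemma hN1 (x : ℝ) : HasDerivAt N1 (N2 x) x := by
  refine hd_congr ((((Real.hasDerivAt_sinh x).const_mul 2).fun_mul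
    (Real.hasDerivAt_cosh x)).fun_sub ((hasDerivAt_id x).const_mul 2)) (fun y => rfl) ?_
  have := Real.cosh_sq x
  simp only [N2, id_eq]; nlinarith [Real.cosh_sq x]

lemma hD1 (x : ℝ) : HasDerivAt D1 (D2 x) x := by
  refine hd_congr ((((hasDerivAt_id x).fun_mul ((Real.hasDerivAt_cosh x).fun_pow 2)).fun_add
    ((hasDerivAt_id x).fun_mul ((Real.hasDerivAt_sinh x).fun_pow 2))).fun_sub
    ((Real.hasDerivAt_sinh x).fun_mul (Real.hasDerivAt_cosh x))) (fun y => rfl) ?_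
  simp only [D2, id_eq]; push_cast; ring

lemma hN2 (x : ℝ) : HasDerivAt N2 (N3 x) x := by
  refine hd_congr (((((Real.hasDerivAt_cosh x).fun_pow 2).const_mul 2).fun_add
    (((Real.hasDerivAt_sinh x).fun_pow 2).const_mul 2)).sub_const 2) (fun y => rfl) ?_
  simp only [N3, id_eq]; push_cast; ring

lemma hD2 (x : ℝ) : HasDerivAt D2 (D3 x) x := by
  refine hd_congr ((((hasDerivAt_id x).const_mul 4).fun_mul (Real.hasDerivAt_sinh x)).fun_mul
    (Real.hasDerivAt_cosh x)) (fun y => rfl) ?_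
  simp only [D3, id_eq]; push_cast; ring

lemma hN3 (x : ℝ) : HasDerivAt N3 (N4 x) x := by
  refine hd_congr (((Real.hasDerivAt_sinh x).const_mul 8).fun_mul (Real.hasDerivAt_cosh x))
    (fun y => rfl) ?_
  simp only [N4, id_eq]; push_cast; ring

lemma hD3 (x : ℝ) : HasDerivAt D3 (D4 x) x := by
  refine hd_congr (((((Real.hasDerivAt_sinh x).const_mul 4).fun_mul (Real.hasDerivAt_cosh x)).fun_add
    (((hasDerivAt_id x).const_mul 4).fun_mul ((Real.hasDerivAt_cosh x).fun_pow 2))).fun_add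
    (((hasDerivAt_id x).const_mul 4).fun_mul ((Real.hasDerivAt_sinh x).fun_pow 2))) (fun y => rfl) ?_
  simp only [D4, id_eq]; push_cast; ring

/-! ### Positivity facts -/

lemma pos_chain {f g : ℝ → ℝ} (hfd : ∀ t, HasDerivAt f (g t) t) (h0 : f 0 = 0)
    (hg : ∀ t, 0 < t → 0 < g t) : ∀ t, 0 < t → 0 < f t := by
  intro t ht
  have hmono : StrictMonoOn f (Ici 0) := by
    apply strictMonoOn_of_deriv_pos (convex_Ici 0)
      (fun x _ => (hfd x).continuousAt.continuousWithinAt)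
    intro x hx
    rw [interior_Ici] at hx
    rw [(hfd x).deriv]
    exact hg x hx
  have := hmono self_mem_Ici ht.le ht
  rwa [h0] at this

lemma sinh_lt_x_cosh {x : ℝ} (hx : 0 < x) : Real.sinh x < x * Real.cosh x := by
  have key : ∀ t : ℝ, 0 < t → 0 < t * Real.cosh t - Real.sinh t := by
    apply pos_chain (g := fun t => t * Real.sinh t)
    · intro y
      refine hd_congr (((hasDerivAt_id y).mul (Real.hasDerivAt_cosh y)).sub
        (Real.hasDerivAt_sinh y)) (fun z => rfl) ?_
      simp only [id_eq]; ring
    · simp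
    · intro y hy; exact mul_pos hy (Real.sinh_pos_iff.2 hy)
  linarith [key x hx]

lemma Df_pos {x : ℝ} (hx : 0 < x) : 0 < Df x := by
  have h1 : 0 < Real.sinh x := Real.sinh_pos_iff.2 hx
  have h2 := sinh_lt_x_cosh hx
  have : Df x = Real.sinh x * (x * Real.cosh x - Real.sinh x) := by unfold Df; ring
  rw [this]; exact mul_pos h1 (by linarith)

lemma Nf_pos {x : ℝ} (hx : 0 < x) : 0 < Nf x := by
  have h1 : x < Real.sinh x := Real.self_lt_sinh_iff.2 hx
  unfold Nf; nlinarith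

lemma D1_pos {x : ℝ} (hx : 0 < x) : 0 < D1 x := by
  have h1 : 0 < Real.sinh x := Real.sinh_pos_iff.2 hx
  have h2 := sinh_lt_x_cosh hx
  have h3 := Real.cosh_pos x
  unfold D1; nlinarith

lemma D2_pos {x : ℝ} (hx : 0 < x) : 0 < D2 x := by
  have h1 : 0 < Real.sinh x := Real.sinh_pos_iff.2 hx
  have h3 := Real.cosh_pos x
  unfold D2; positivity

lemma D3_pos {x : ℝ} (hx : 0 < x) : 0 < D3 x := by
  have h1 : 0 < Real.sinh x := Real.sinh_pos_iff.2 hx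
  have h3 := Real.cosh_pos x
  unfold D3; positivity

lemma D4_pos {x : ℝ} (hx : 0 < x) : 0 < D4 x := by
  have h1 : 0 < Real.sinh x := Real.sinh_pos_iff.2 hx
  have h3 := Real.cosh_pos x
  unfold D4; positivity

/-! ### The key inequality: N1 * Df - Nf * D1 < 0 on (0,∞) -/

lemma key_id (x : ℝ) :
    P 0 6 0 1 2 0 (-3) 0 0 (-1) (-6) 0 (2*x) = 8 * (N1 x * Df x - Nf x * D1 x) := by
  simp only [P, N1, Df, Nf, D1, Real.cosh_two_mul, Real.sinh_two_mul]
  linear_combination (12*x - 8*x*Real.sinh x^2 - 4*Real.sinh x*Real.cosh x) * Real.cosh_sq x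

lemma numer_neg {x : ℝ} (hx : 0 < x) : N1 x * Df x - Nf x * D1 x < 0 := by
  have := phi0_neg (2*x) (by linarith)
  rw [key_id] at this
  linarith

/-! ### Relation to langevinDeriv -/

lemma langevinDeriv_eq {x : ℝ} (hx : 0 < x) : langevinDeriv x = Nf x / Df x := by
  have hs : Real.sinh x ≠ 0 := (Real.sinh_pos_iff.2 hx).ne'
  have hx' : x ≠ 0 := hx.ne'
  have hD : Df x ≠ 0 := (Df_pos hx).ne'
  have hden : Real.cosh x / Real.sinh x - x⁻¹ ≠ 0 := by
    have h2 := sinh_lt_x_cosh hx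
    have hrw : Real.cosh x / Real.sinh x - x⁻¹
        = (x * Real.cosh x - Real.sinh x) / (x * Real.sinh x) := by
      field_simp
    rw [hrw]
    exact div_ne_zero (by linarith) (by positivity)
  unfold langevinDeriv
  rw [div_eq_div_iff hden hD]
  unfold Nf Df
  field_simp

lemma contOn : ContinuousOn langevinDeriv (Ioi 0) := by
  have h : ContinuousOn (fun x => Nf x / Df x) (Ioi 0) := fun x hx =>
    (((hN0 x).div (hD0 x) (Df_pos hx).ne').continuousAt).continuousWithinAt
  exact h.congr fun x hx => langevinDeriv_eq hx

lemma main_anti : StrictAntiOn langevinDeriv (Ioi 0) := by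
  have hQuot : ∀ x ∈ Ioi (0:ℝ), HasDerivAt (fun y => Nf y / Df y)
      ((N1 x * Df x - Nf x * D1 x)/(Df x)^2) x := fun x hx =>
    (hN0 x).div (hD0 x) (Df_pos hx).ne'
  have anti : StrictAntiOn (fun y => Nf y / Df y) (Ioi 0) := by
    apply strictAntiOn_of_deriv_neg (convex_Ioi 0)
      (fun x hx => (hQuot x hx).continuousAt.continuousWithinAt)
    intro x hx
    rw [interior_Ioi] at hx
    rw [(hQuot x hx).deriv]
    exact div_neg_of_neg_of_pos (numer_neg hx) (pow_pos (Df_pos hx) 2)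
  intro a ha b hb hab
  rw [langevinDeriv_eq ha, langevinDeriv_eq hb]
  exact anti ha hb hab

/-! ### Limit at 0⁺ -/

lemma tendsto_zero_aux {f : ℝ → ℝ} (hf : Continuous f) (h0 : f 0 = 0) :
    Tendsto f (nhdsWithin (0:ℝ) (Ioi 0)) (𝓝 0) := by
  have := hf.tendsto 0
  rw [h0] at this
  exact this.mono_left nhdsWithin_le_nhds

lemma ev_ne {g : ℝ → ℝ} (hg : ∀ x : ℝ, 0 < x → 0 < g x) :
    ∀ᶠ x in nhdsWithin (0:ℝ) (Ioi 0), g x ≠ 0 :=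
  Filter.eventually_iff_exists_mem.2 ⟨Ioi 0, self_mem_nhdsWithin, fun x hx => (hg x hx).ne'⟩

lemma limit_zero : Tendsto langevinDeriv (nhdsWithin (0:ℝ) (Ioi 0)) (𝓝 1) := by
  have cNf : Continuous Nf := by unfold Nf; fun_prop
  have cDf : Continuous Df := by unfold Df; fun_prop
  have cN1 : Continuous N1 := by unfold N1; fun_prop
  have cD1 : Continuous D1 := by unfold D1; fun_prop
  have cN2 : Continuous N2 := by unfold N2; fun_prop
  have cD2 : Continuous D2 := by unfold D2; fun_prop
  have cN3 : Continuous N3 := by unfold N3; fun_prop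
  have cD3 : Continuous D3 := by unfold D3; fun_prop
  have cN4 : Continuous N4 := by unfold N4; fun_prop
  have cD4 : Continuous D4 := by unfold D4; fun_prop
  have T4 : Tendsto (fun x => N4 x / D4 x) (nhdsWithin (0:ℝ) (Ioi 0)) (𝓝 1) := by
    have h := ((cN4.tendsto 0).div (cD4.tendsto 0) (by norm_num [D4]))
    have hv : N4 0 / D4 0 = 1 := by norm_num [N4, D4]
    rw [hv] at h
    exact h.mono_left nhdsWithin_le_nhds
  have T3 : Tendsto (fun x => N3 x / D3 x) (nhdsWithin (0:ℝ) (Ioi 0)) (𝓝 1) :=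
    HasDerivAt.lhopital_zero_nhdsGT (Filter.Eventually.of_forall hN3)
      (Filter.Eventually.of_forall hD3) (ev_ne fun x hx => D4_pos hx)
      (tendsto_zero_aux cN3 (by norm_num [N3])) (tendsto_zero_aux cD3 (by norm_num [D3])) T4
  have T2 : Tendsto (fun x => N2 x / D2 x) (nhdsWithin (0:ℝ) (Ioi 0)) (𝓝 1) :=
    HasDerivAt.lhopital_zero_nhdsGT (Filter.Eventually.of_forall hN2)
      (Filter.Eventually.of_forall hD2) (ev_ne fun x hx => D3_pos hx)
      (tendsto_zero_aux cN2 (by norm_num [N2])) (tendsto_zero_aux cD2 (by norm_num [D2])) T3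
  have T1 : Tendsto (fun x => N1 x / D1 x) (nhdsWithin (0:ℝ) (Ioi 0)) (𝓝 1) :=
    HasDerivAt.lhopital_zero_nhdsGT (Filter.Eventually.of_forall hN1)
      (Filter.Eventually.of_forall hD1) (ev_ne fun x hx => D2_pos hx)
      (tendsto_zero_aux cN1 (by norm_num [N1])) (tendsto_zero_aux cD1 (by norm_num [D1])) T2
  have T0 : Tendsto (fun x => Nf x / Df x) (nhdsWithin (0:ℝ) (Ioi 0)) (𝓝 1) :=
    HasDerivAt.lhopital_zero_nhdsGT (Filter.Eventually.of_forall hN0)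
      (Filter.Eventually.of_forall hD0) (ev_ne fun x hx => D1_pos hx)
      (tendsto_zero_aux cNf (by norm_num [Nf])) (tendsto_zero_aux cDf (by norm_num [Df])) T1
  apply T0.congr'
  exact Filter.eventuallyEq_of_mem self_mem_nhdsWithin fun x hx => (langevinDeriv_eq hx).symm

/-! ### Limit at ∞ -/

lemma limit_top : Tendsto langevinDeriv atTop (𝓝 0) := by
  have l1 : Tendsto (fun x : ℝ => x⁻¹) atTop (𝓝 0) := tendsto_inv_atTop_zero
  have l2 : Tendsto (fun x : ℝ => x / Real.sinh x ^ 2) atTop (𝓝 0) := by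
    apply tendsto_of_tendsto_of_tendsto_of_le_of_le' tendsto_const_nhds l1
    · filter_upwards [eventually_ge_atTop (1:ℝ)] with x hx
      have hs : 0 < Real.sinh x := Real.sinh_pos_iff.2 (by linarith)
      positivity
    · filter_upwards [eventually_ge_atTop (1:ℝ)] with x hx
      have hx0 : 0 < x := by linarith
      have hs : x ≤ Real.sinh x := Real.self_le_sinh_iff.2 hx0.le
      have h2 : x^2 ≤ Real.sinh x ^ 2 := by nlinarith
      calc x / Real.sinh x ^ 2 ≤ x / x^2 := by
            apply div_le_div_of_nonneg_left hx0.le (by positivity) h2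
        _ = x⁻¹ := by field_simp
  have l3 : Tendsto (fun x : ℝ => Real.cosh x / Real.sinh x) atTop (𝓝 1) := by
    have htail : Tendsto (fun x : ℝ => Real.exp (-x) / Real.sinh x) atTop (𝓝 0) := by
      apply tendsto_of_tendsto_of_tendsto_of_le_of_le' tendsto_const_nhds
        Real.tendsto_exp_neg_atTop_nhds_zero
      · filter_upwards [eventually_ge_atTop (1:ℝ)] with x hx
        have hs : 0 < Real.sinh x := Real.sinh_pos_iff.2 (by linarith)
        positivity
      · filter_upwards [eventually_ge_atTop (1:ℝ)] with x hx
        have hx0 : 0 < x := by linarith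
        have hs : x ≤ Real.sinh x := Real.self_le_sinh_iff.2 hx0.le
        have hs1 : 1 ≤ Real.sinh x := le_trans hx hs
        have he : 0 < Real.exp (-x) := Real.exp_pos _
        calc Real.exp (-x) / Real.sinh x ≤ Real.exp (-x) / 1 := by
              apply div_le_div_of_nonneg_left he.le one_pos hs1
          _ = Real.exp (-x) := by ring
    have h := (tendsto_const_nhds : Tendsto (fun _ : ℝ => (1:ℝ)) atTop (𝓝 1)).add htail
    rw [add_zero] at h
    apply (h.congr' _ : Tendsto _ atTop (𝓝 (1:ℝ)))
    filter_upwards [eventually_ge_atTop (1:ℝ)] with x hx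
    have hs : Real.sinh x ≠ 0 := (Real.sinh_pos_iff.2 (by linarith)).ne'
    have hcs : Real.cosh x - Real.sinh x = Real.exp (-x) := Real.cosh_sub_sinh x
    field_simp
    linarith
  have h := (l1.sub l2).div (l3.sub l1) (by norm_num)
  norm_num at h
  exact h

/-! ### Derivative of the Langevin law at s = 1 -/

lemma law_deriv {lam : ℝ} (hl : 0 < lam) :
    deriv (langevinLaw lam) 1 = langevinDeriv lam := by
  have hs : Real.sinh lam ≠ 0 := (Real.sinh_pos_iff.2 hl).ne'
  have hl' : lam ≠ 0 := hl.ne'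
  have hlin : HasDerivAt (fun s : ℝ => lam * s) lam 1 := by
    simpa using (hasDerivAt_id (1:ℝ)).const_mul lam
  have hsl1 : Real.sinh (lam * 1) ≠ 0 := by rwa [mul_one]
  have hl1 : lam * 1 ≠ 0 := by rwa [mul_one]
  have h1 : HasDerivAt (fun s : ℝ => Real.cosh (lam*s)) (Real.sinh (lam*1) * lam) 1 :=
    (Real.hasDerivAt_cosh (lam*1)).comp 1 hlin
  have h2 : HasDerivAt (fun s : ℝ => Real.sinh (lam*s)) (Real.cosh (lam*1) * lam) 1 :=
    (Real.hasDerivAt_sinh (lam*1)).comp 1 hlin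
  have h3 := h1.div h2 hsl1
  have h4 : HasDerivAt (fun s : ℝ => (lam*s)⁻¹) (-((lam*1)^2)⁻¹ * lam) 1 :=
    (hasDerivAt_inv hl1).comp 1 hlin
  have h5 := (h3.sub h4).div_const (Real.cosh lam / Real.sinh lam - lam⁻¹)
  have h6 : HasDerivAt (langevinLaw lam) _ 1 :=
    h5.congr_of_eventuallyEq (Filter.Eventually.of_forall fun s => rfl)
  rw [h6.deriv]
  unfold langevinDeriv
  rw [mul_one] at *
  congr 1
  field_simp
  linear_combination (- lam^2) * Real.cosh_sq lam

end LangevinAux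

/-- `g` is strictly decreasing on `(0, ∞)` with `g(0⁺) = 1` and `g(∞) = 0`;
consequently, for every `α₀ > 6` the equation `g(λ) = 6/α₀` has a unique solution
`λ⋆(α₀) ∈ (0, ∞)`. For the Langevin law one has `m₁′(1) = g(λ)`, so `λ⋆(α₀)` is
the unique parameter value at which `α₀ m₁′(1) = 6`. -/
theorem langevin_critical_parameter :
    StrictAntiOn langevinDeriv (Set.Ioi 0) ∧
    Tendsto langevinDeriv (nhdsWithin 0 (Set.Ioi 0)) (𝓝 1) ∧
    Tendsto langevinDeriv atTop (𝓝 0) ∧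
    (∀ α₀ : ℝ, 6 < α₀ →
      ∃! lam : ℝ, lam ∈ Set.Ioi (0:ℝ) ∧ langevinDeriv lam = 6 / α₀) ∧
    (∀ lam : ℝ, 0 < lam → deriv (langevinLaw lam) 1 = langevinDeriv lam) := by
  refine ⟨LangevinAux.main_anti, LangevinAux.limit_zero, LangevinAux.limit_top, ?_,
    fun lam hl => LangevinAux.law_deriv hl⟩
  intro α₀ hα
  have hα0 : (0:ℝ) < α₀ := by linarith
  have hy0 : 0 < 6/α₀ := by positivity
  have hy1 : 6/α₀ < 1 := by rw [div_lt_one hα0]; linarith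
  obtain ⟨a, hay, ha0⟩ :=
    ((LangevinAux.limit_zero.eventually (eventually_gt_nhds hy1)).and
      self_mem_nhdsWithin).exists
  obtain ⟨b, hby, hba⟩ :=
    ((LangevinAux.limit_top.eventually (eventually_lt_nhds hy0)).and
      (eventually_gt_atTop a)).exists
  have ha0' : (0:ℝ) < a := ha0
  have hb0 : (0:ℝ) < b := lt_trans ha0' hba
  have hsub : Icc a b ⊆ Ioi 0 := fun x hx => lt_of_lt_of_le ha0' hx.1
  have hcont : ContinuousOn langevinDeriv (Icc a b) := LangevinAux.contOn.mono hsub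
  have hIcc : 6/α₀ ∈ Icc (langevinDeriv b) (langevinDeriv a) := ⟨hby.le, hay.le⟩
  obtain ⟨lam, hlamIcc, hlameq⟩ := intermediate_value_Icc' hba.le hcont hIcc
  have hlam0 : lam ∈ Ioi (0:ℝ) := hsub hlamIcc
  refine ⟨lam, ⟨hlam0, hlameq⟩, ?_⟩
  rintro lam' ⟨hlam'0, heq'⟩
  exact LangevinAux.main_anti.injOn hlam'0 hlam0 (by rw [heq', hlameq])
end
end
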